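/- Let f: ℝ → ℝ be continuously differentiable with locally Hölder continuous derivative of exponent β ∈ (0,1], with f(0) = 0 and f'(0) = 0, and let F(u) = ∫₀^u f. Define G(u,v) := F(u+v) - F(u) - F(v) - f(u)v - f(v)u. Then for every ū > 0 there exists b₂ > 0 such that |G(u,v)| ≤ b₂ |uv|^{1+β/2} for all u, v ∈ [-ū, ū]. -/

import Mathlib

/-- For `f ∈ C¹` with locally `β`-Hölder derivative, `f 0 = 0`, `f' 0 = 0`, and `F` the primitive
of `f`, the function `G(u,v) = F(u+v) - F u - F v - f u * v - f v * u` satisfies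
`|G(u,v)| ≤ b₂ |uv|^{1+β/2}` on `[-ū,ū]²` for some `b₂ > 0`. -/
theorem stmt1 (f : ℝ → ℝ) (β : ℝ) (hβ0 : 0 < β) (hβ1 : β ≤ 1)
    (hdiff : Differentiable ℝ f)
    (hholder : ∀ K : Set ℝ, IsCompact K → ∃ C > 0, ∀ s ∈ K, ∀ t ∈ K,
      |deriv f s - deriv f t| ≤ C * |s - t| ^ β)
    (hf0 : f 0 = 0) (hf'0 : deriv f 0 = 0)
    (F : ℝ → ℝ) (hF : ∀ u : ℝ, F u = ∫ t in (0:ℝ)..u, f t)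
    (ub : ℝ) (hub : 0 < ub) :
    ∃ b₂ > 0, ∀ u ∈ Set.Icc (-ub) ub, ∀ v ∈ Set.Icc (-ub) ub,
      |F (u + v) - F u - F v - f u * v - f v * u| ≤ b₂ * |u * v| ^ (1 + β / 2) := by
  have hFeq : F = fun u => ∫ t in (0:ℝ)..u, f t := funext hF
  subst hFeq
  have hcf : Continuous f := hdiff.continuous
  -- continuity of deriv f
  have hc : Continuous (deriv f) := by
    rw [continuous_iff_continuousAt]
    intro x
    obtain ⟨C, hC, hb⟩ := hholder (Set.Icc (x - 1) (x + 1)) isCompact_Icc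
    apply tendsto_iff_dist_tendsto_zero.mpr
    refine squeeze_zero' (f := fun s => dist (deriv f s) (deriv f x))
      (g := fun s => C * |s - x| ^ β)
      (Filter.Eventually.of_forall fun s => dist_nonneg) ?_ ?_
    · filter_upwards [Icc_mem_nhds (by linarith : x - 1 < x) (by linarith : x < x + 1)]
        with s hs
      rw [Real.dist_eq]
      exact hb s hs x (by constructor <;> linarith)
    · have h1 : Filter.Tendsto (fun s : ℝ => |s - x|) (nhds x) (nhds 0) := by
        have hcont : Continuous (fun s : ℝ => |s - x|) :=
          ((continuous_sub_right x).abs)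
        have := hcont.tendsto x
        simpa using this
      have h2 : ContinuousAt (fun y : ℝ => y ^ β) 0 :=
        Real.continuousAt_rpow_const 0 β (Or.inr hβ0.le)
      have h3 := h2.tendsto.comp h1
      simp only [Function.comp, Real.zero_rpow hβ0.ne'] at h3
      simpa using tendsto_const_nhds.mul h3
  -- fundamental theorem for F
  have hF' : ∀ x : ℝ, HasDerivAt (fun y => ∫ t in (0:ℝ)..y, f t) (f x) x := fun x =>
    intervalIntegral.integral_hasDerivAt_right (hcf.intervalIntegrable 0 x)
      (hcf.aestronglyMeasurable.stronglyMeasurableAtFilter) hcf.continuousAt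
  obtain ⟨C, hC, hb⟩ := hholder (Set.Icc (-(2 * ub)) (2 * ub)) isCompact_Icc
  have hmemK : ∀ x : ℝ, x ∈ Set.Icc (-ub) ub → x ∈ Set.Icc (-(2 * ub)) (2 * ub) := by
    intro x hx
    obtain ⟨h1, h2⟩ := hx
    constructor <;> linarith
  have h0K : (0 : ℝ) ∈ Set.Icc (-(2 * ub)) (2 * ub) := by constructor <;> linarith
  have hβ2 : (0 : ℝ) < β / 2 := by linarith
  -- auxiliary rpow fact : |s|^β = |s|^(β/2) * |s|^(β/2)
  have hsplit : ∀ s : ℝ, |s| ^ β = |s| ^ (β / 2) * |s| ^ (β / 2) := by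
    intro s
    rw [← Real.rpow_add' (abs_nonneg s) (by linarith)]
    norm_num
  have aux : ∀ s t : ℝ, s ∈ Set.Icc (-ub) ub → t ∈ Set.Icc (-ub) ub → |s| ≤ |t| →
      |deriv f (s + t) - deriv f s - deriv f t| ≤ 2 * C * (|s| ^ (β / 2) * |t| ^ (β / 2)) := by
    intro s t hs ht hst
    have hsK := hmemK s hs
    have htK := hmemK t ht
    have hstK : s + t ∈ Set.Icc (-(2 * ub)) (2 * ub) := by
      obtain ⟨a1, a2⟩ := hs; obtain ⟨b1, b2⟩ := ht
      constructor <;> linarith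
    have e1 : |deriv f (s + t) - deriv f t| ≤ C * |s| ^ β := by
      have := hb (s + t) hstK t htK
      simpa using this
    have e2 : |deriv f s| ≤ C * |s| ^ β := by
      have := hb s hsK 0 h0K
      simpa [hf'0] using this
    calc |deriv f (s + t) - deriv f s - deriv f t|
        ≤ |deriv f (s + t) - deriv f t| + |deriv f s| := by
          have : deriv f (s + t) - deriv f s - deriv f t
              = (deriv f (s + t) - deriv f t) - deriv f s := by ring
          rw [this]
          exact abs_sub _ _
      _ ≤ C * |s| ^ β + C * |s| ^ β := add_le_add e1 e2
      _ = 2 * C * (|s| ^ (β / 2) * |s| ^ (β / 2)) := by rw [← hsplit]; ring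
      _ ≤ 2 * C * (|s| ^ (β / 2) * |t| ^ (β / 2)) := by
          gcongr
  have key1 : ∀ s ∈ Set.Icc (-ub) ub, ∀ t ∈ Set.Icc (-ub) ub,
      |deriv f (s + t) - deriv f s - deriv f t| ≤ 2 * C * (|s| ^ (β / 2) * |t| ^ (β / 2)) := by
    intro s hs t ht
    rcases le_total |s| |t| with h | h
    · exact aux s t hs ht h
    · have := aux t s ht hs h
      have heq : deriv f (s + t) - deriv f s - deriv f t
          = deriv f (t + s) - deriv f t - deriv f s := by rw [add_comm]; ring
      rw [heq]
      calc _ ≤ 2 * C * (|t| ^ (β / 2) * |s| ^ (β / 2)) := this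
        _ = 2 * C * (|s| ^ (β / 2) * |t| ^ (β / 2)) := by ring
  -- membership from |s| ≤ |u|
  have memOf : ∀ s u : ℝ, u ∈ Set.Icc (-ub) ub → |s| ≤ |u| → s ∈ Set.Icc (-ub) ub := by
    intro s u hu hsu
    have : |u| ≤ ub := abs_le.mpr ⟨hu.1, hu.2⟩
    have := abs_le.mp (hsu.trans this)
    exact ⟨this.1, this.2⟩
  have absOf : ∀ s u : ℝ, s ∈ Set.uIoc 0 u → |s| ≤ |u| := by
    intro s u hs
    rcases Set.mem_uIoc.mp hs with h | h
    · rw [abs_of_pos h.1, abs_of_nonneg (h.1.le.trans h.2)]; exact h.2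
    · rw [abs_of_nonpos h.2, abs_of_neg (lt_of_lt_of_le h.1 h.2)]
      linarith [h.1.le]
  -- rpow splitting |u|^(1+β/2) = |u|^(β/2) * |u|
  have hsplit2 : ∀ u : ℝ, |u| ^ (1 + β / 2) = |u| ^ (β / 2) * |u| := by
    intro u
    rw [Real.rpow_add' (abs_nonneg u) (by linarith), Real.rpow_one, mul_comm]
  have key2 : ∀ u ∈ Set.Icc (-ub) ub, ∀ t ∈ Set.Icc (-ub) ub,
      |f (u + t) - f t - f u - u * deriv f t|
        ≤ 2 * C * (|u| ^ (1 + β / 2) * |t| ^ (β / 2)) := by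
    intro u hu t ht
    have hder : ∀ s ∈ Set.uIcc 0 u, HasDerivAt (fun s => f (s + t) - f s - s * deriv f t)
        (deriv f (s + t) - deriv f s - deriv f t) s := by
      intro s _
      have h1 : HasDerivAt (fun s : ℝ => f (s + t)) (deriv f (s + t)) s := by
        have := ((hdiff (s + t)).hasDerivAt).comp s ((hasDerivAt_id s).add_const t)
        simpa [Function.comp_def] using this
      have h2 := (hdiff s).hasDerivAt
      have h3 : HasDerivAt (fun s : ℝ => s * deriv f t) (deriv f t) s := by
        simpa using (hasDerivAt_id s).mul_const (deriv f t)
      have := (h1.sub h2).sub h3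
      exact this
    have hint : IntervalIntegrable (fun s => deriv f (s + t) - deriv f s - deriv f t)
        MeasureTheory.volume 0 u :=
      (((hc.comp (continuous_id.add continuous_const)).sub hc).sub continuous_const).intervalIntegrable 0 u
    have heq := intervalIntegral.integral_eq_sub_of_hasDerivAt hder hint
    have heq2 : (∫ s in (0:ℝ)..u, (deriv f (s + t) - deriv f s - deriv f t))
        = f (u + t) - f t - f u - u * deriv f t := by
      rw [heq]; simp [hf0]; ring
    rw [← heq2]
    have hbound := intervalIntegral.norm_integral_le_of_norm_le_const
      (C := 2 * C * (|u| ^ (β / 2) * |t| ^ (β / 2)))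
      (f := fun s => deriv f (s + t) - deriv f s - deriv f t) (a := 0) (b := u) ?_
    · rw [Real.norm_eq_abs] at hbound
      calc |∫ s in (0:ℝ)..u, (deriv f (s + t) - deriv f s - deriv f t)|
          ≤ 2 * C * (|u| ^ (β / 2) * |t| ^ (β / 2)) * |u - 0| := hbound
        _ = 2 * C * (|u| ^ (1 + β / 2) * |t| ^ (β / 2)) := by
            rw [hsplit2 u]; ring_nf
    · intro s hs
      have h1 := absOf s u hs
      have hsIcc := memOf s u hu h1
      rw [Real.norm_eq_abs]
      calc |deriv f (s + t) - deriv f s - deriv f t|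
          ≤ 2 * C * (|s| ^ (β / 2) * |t| ^ (β / 2)) := key1 s hsIcc t ht
        _ ≤ 2 * C * (|u| ^ (β / 2) * |t| ^ (β / 2)) := by
            gcongr
  refine ⟨2 * C, by linarith, ?_⟩
  intro u hu v hv
  set Fi : ℝ → ℝ := fun y => ∫ t in (0:ℝ)..y, f t with hFi
  have hder : ∀ t ∈ Set.uIcc 0 v, HasDerivAt
      (fun t => Fi (u + t) - Fi u - Fi t - f u * t - f t * u)
      (f (u + t) - f t - f u - deriv f t * u) t := by
    intro t _
    have h1 : HasDerivAt (fun t : ℝ => Fi (u + t)) (f (u + t)) t := by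
      have := (hF' (u + t)).comp t ((hasDerivAt_const t u).add (hasDerivAt_id t))
      simpa [Function.comp_def] using this
    have h2 := hF' t
    have h3 : HasDerivAt (fun t : ℝ => f u * t) (f u) t := by
      simpa using (hasDerivAt_id t).const_mul (f u)
    have h4 : HasDerivAt (fun t : ℝ => f t * u) (deriv f t * u) t :=
      (hdiff t).hasDerivAt.mul_const u
    have := (((h1.sub_const (Fi u)).sub h2).sub h3).sub h4
    exact this
  have hint : IntervalIntegrable (fun t => f (u + t) - f t - f u - deriv f t * u)
      MeasureTheory.volume 0 v :=
    ((((hcf.comp (continuous_const.add continuous_id)).sub hcf).sub continuous_const).sub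
      (hc.mul continuous_const)).intervalIntegrable 0 v
  have heq := intervalIntegral.integral_eq_sub_of_hasDerivAt hder hint
  have hFi0 : Fi 0 = 0 := by simp [hFi]
  have heq2 : (∫ t in (0:ℝ)..v, (f (u + t) - f t - f u - deriv f t * u))
      = Fi (u + v) - Fi u - Fi v - f u * v - f v * u := by
    rw [heq]; simp [hf0, hFi0]
  rw [← heq2]
  have hbound := intervalIntegral.norm_integral_le_of_norm_le_const
    (C := 2 * C * (|u| ^ (1 + β / 2) * |v| ^ (β / 2)))
    (f := fun t => f (u + t) - f t - f u - deriv f t * u) (a := 0) (b := v) ?_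
  · rw [Real.norm_eq_abs] at hbound
    calc |∫ t in (0:ℝ)..v, (f (u + t) - f t - f u - deriv f t * u)|
        ≤ 2 * C * (|u| ^ (1 + β / 2) * |v| ^ (β / 2)) * |v - 0| := hbound
      _ = 2 * C * (|u| ^ (1 + β / 2) * |v| ^ (1 + β / 2)) := by rw [hsplit2 v]; ring_nf
      _ = 2 * C * |u * v| ^ (1 + β / 2) := by
          rw [abs_mul, Real.mul_rpow (abs_nonneg u) (abs_nonneg v)]
  · intro t ht
    have h1 := absOf t v ht
    have htIcc := memOf t v hv h1
    show ‖f (u + t) - f t - f u - deriv f t * u‖ ≤ _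
    rw [Real.norm_eq_abs, show f (u + t) - f t - f u - deriv f t * u
      = f (u + t) - f t - f u - u * deriv f t from by ring]
    calc |f (u + t) - f t - f u - u * deriv f t|
        ≤ 2 * C * (|u| ^ (1 + β / 2) * |t| ^ (β / 2)) := key2 u hu t htIcc
      _ ≤ 2 * C * (|u| ^ (1 + β / 2) * |v| ^ (β / 2)) := by
          gcongr
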